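/- Let G be a finite p-group of order p^n with n ≥ 2 having dense CD-subgroups, and let H ≤ G be a subgroup of order p with H ≠ Z(G). Then m_G(H) = p^n. -/

import Mathlib

open Pointwise

/-- Chermak–Delgado measure of a subgroup. -/
noncomputable def mCD (G : Type*) [Group G] (H : Subgroup G) : ℕ :=
  Nat.card H * Nat.card (Subgroup.centralizer (H : Set G))

/-- Maximal Chermak–Delgado measure. -/
noncomputable def mStar (G : Type*) [Group G] : ℕ :=
  sSup (Set.range (mCD G))

/-- Chermak–Delgado lattice (as a set of subgroups). -/
def CD (G : Type*) [Group G] : Set (Subgroup G) :=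
  {H | mCD G H = mStar G}

/-- A group has dense CD-subgroups if for all subgroups H < K with H not
maximal in K, there exists X in CD(G) with H < X < K. -/
def DenseCD (G : Type*) [Group G] : Prop :=
  ∀ H K : Subgroup G, H < K → (∃ L : Subgroup G, H < L ∧ L < K) →
    ∃ X ∈ CD G, H < X ∧ X < K

private lemma subgroup_eq_of_le_of_card_le {G : Type*} [Group G] [Finite G] {X Y : Subgroup G}
    (h : X ≤ Y) (hc : Nat.card Y ≤ Nat.card X) : X = Y := by
  have hc' : (Y : Set G).ncard ≤ (X : Set G).ncard := by
    rwa [← Nat.card_coe_set_eq, ← Nat.card_coe_set_eq,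
      SetLike.coe_sort_coe, SetLike.coe_sort_coe]
  exact SetLike.coe_injective (Set.eq_of_subset_of_ncard_le h hc' (Set.toFinite _))

theorem stmt11 (G : Type*) [Group G] [Finite G] (p n : ℕ) (hp : p.Prime) (hn : 2 ≤ n)
    (hcard : Nat.card G = p ^ n) (hd : DenseCD G)
    (H : Subgroup G) (hH : Nat.card H = p) (hne : H ≠ Subgroup.center G) :
    mCD G H = p ^ n := by
  haveI : Fact p.Prime := ⟨hp⟩
  set Z := Subgroup.center G with hZdef
  haveI : Nontrivial G := Finite.one_lt_card_iff_nontrivial.mp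
    (by rw [hcard]; exact Nat.one_lt_pow (by omega) hp.one_lt)
  have hpG : IsPGroup p G := IsPGroup.of_card hcard
  haveI : Nontrivial Z := hpG.center_nontrivial
  have hZcard : 1 < Nat.card Z := Finite.one_lt_card
  have hbdd : BddAbove (Set.range (mCD G)) := (Set.finite_range _).bddAbove
  have hle_star : ∀ K : Subgroup G, mCD G K ≤ mStar G := fun K => le_csSup hbdd ⟨K, rfl⟩
  -- every member of the CD lattice contains the center
  have hZle : ∀ X ∈ CD G, Z ≤ X := by
    intro X hX
    have hc : Subgroup.centralizer ((X ⊔ Z : Subgroup G) : Set G)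
        = Subgroup.centralizer (X : Set G) := by
      refine le_antisymm
        (Subgroup.centralizer_le (SetLike.coe_subset_coe.mpr le_sup_left)) ?_
      exact Subgroup.le_centralizer_iff.mpr
        (sup_le (Subgroup.le_centralizer_iff.mpr le_rfl) (Subgroup.center_le_centralizer _))
    have h1 : Nat.card X ≤ Nat.card (X ⊔ Z : Subgroup G) := Subgroup.card_le_of_le le_sup_left
    have h2 : mCD G X ≤ mCD G (X ⊔ Z) := by
      rw [mCD, mCD, hc]; exact Nat.mul_le_mul_right _ h1
    have h4 : mCD G (X ⊔ Z) = mCD G X := le_antisymm ((hle_star _).trans_eq hX.symm) (hX ▸ h2)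
    have hcpos : 0 < Nat.card (Subgroup.centralizer (X : Set G)) := Nat.card_pos
    have h5 : Nat.card (X ⊔ Z : Subgroup G) ≤ Nat.card X := by
      have h6 : Nat.card (X ⊔ Z : Subgroup G) * Nat.card (Subgroup.centralizer (X : Set G))
          = Nat.card X * Nat.card (Subgroup.centralizer (X : Set G)) := by
        have := h4; rw [mCD, mCD, hc] at this; exact this
      exact Nat.le_of_mul_le_mul_right (le_of_eq h6) hcpos
    exact le_trans le_sup_right (subgroup_eq_of_le_of_card_le le_sup_left h5).ge
  by_cases hHZ : H ≤ Z
  · -- impossible: H would be a proper subgroup of the center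
    exfalso
    have hHneZ : H < Z := lt_of_le_of_ne hHZ hne
    have hHbot : (⊥ : Subgroup G) < H := by
      rw [bot_lt_iff_ne_bot]
      intro h
      rw [h, Subgroup.card_bot] at hH
      exact hp.ne_one hH.symm
    obtain ⟨X, hX, _, hX2⟩ := hd ⊥ Z (hHbot.trans hHneZ) ⟨H, hHbot, hHneZ⟩
    exact absurd (hZle X hX) (not_le_of_gt hX2)
  · -- main case: H is not central
    have hZnotleH : ¬ Z ≤ H := by
      intro hZH
      have hdvd : Nat.card Z ∣ p := hH ▸ Subgroup.card_dvd_of_le hZH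
      have hz : Nat.card Z = p := (hp.eq_one_or_self_of_dvd _ hdvd).resolve_left (by omega)
      exact hne (subgroup_eq_of_le_of_card_le hZH (le_of_eq (hH.trans hz.symm))).symm
    have hcyc : IsCyclic H := isCyclic_of_prime_card hH
    haveI hcomm : IsMulCommutative H := by
      letI := hcyc.commGroup
      exact ⟨⟨mul_comm⟩⟩
    have hHC : H ≤ Subgroup.centralizer (H : Set G) := Subgroup.le_centralizer H
    have hZC : Z ≤ Subgroup.centralizer (H : Set G) := Subgroup.center_le_centralizer _
    have hCneTop : Subgroup.centralizer (H : Set G) ≠ ⊤ := by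
      intro htop
      exact hHZ (fun x hx => Subgroup.centralizer_eq_top_iff_subset.mp htop hx)
    have hHltC : H < Subgroup.centralizer (H : Set G) :=
      hHC.lt_of_ne (fun h => hZnotleH (le_trans hZC h.ge))
    have hCltTop : Subgroup.centralizer (H : Set G) < ⊤ := lt_top_iff_ne_top.mpr hCneTop
    obtain ⟨X0, hX0cd, hX0l, _⟩ :=
      hd H ⊤ (hHltC.trans_le le_top) ⟨_, hHltC, hCltTop⟩
    -- pick a minimal CD-member strictly containing H
    obtain ⟨X, ⟨hXcd, hHX⟩, hmin⟩ :=
      Set.exists_min_image {X : Subgroup G | X ∈ CD G ∧ H < X} (fun X => Nat.card X)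
        (Set.toFinite _) ⟨X0, hX0cd, hX0l⟩
    have hHltHZ : H < H ⊔ Z :=
      lt_of_le_of_ne le_sup_left (fun h => hZnotleH (le_trans le_sup_right h.ge))
    have hXeq : X = H ⊔ Z := by
      by_contra hne'
      have hlt : H ⊔ Z < X :=
        lt_of_le_of_ne (sup_le hHX.le (hZle X hXcd)) (Ne.symm hne')
      obtain ⟨X', hX'cd, h1, h2⟩ := hd H X hHX ⟨H ⊔ Z, hHltHZ, hlt⟩
      exact h2.ne (subgroup_eq_of_le_of_card_le h2.le (hmin X' ⟨hX'cd, h1⟩))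
    -- |X| ≤ p * |Z|
    have hcardX : Nat.card X ≤ p * Nat.card Z := by
      have hmul : ((H ⊔ Z : Subgroup G) : Set G) = (H : Set G) * (Z : Set G) :=
        Subgroup.mul_normal H Z
      have h1 : Nat.card X = Nat.card ((H : Set G) * (Z : Set G)) := by
        rw [hXeq, ← hmul, SetLike.coe_sort_coe]
      rw [h1, ← hH]
      exact le_trans Set.natCard_mul_le (by rw [SetLike.coe_sort_coe, SetLike.coe_sort_coe])
    -- centralizer comparison
    have hcXH : Nat.card (Subgroup.centralizer (X : Set G))
        ≤ Nat.card (Subgroup.centralizer (H : Set G)) :=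
      Subgroup.card_le_of_le
        (Subgroup.centralizer_le (SetLike.coe_subset_coe.mpr hHX.le))
    -- mStar ≥ |Z| * p^n
    have hm1 : Nat.card Z * p ^ n ≤ mStar G := by
      have hcz : Subgroup.centralizer (Z : Set G) = ⊤ :=
        Subgroup.centralizer_eq_top_iff_subset.mpr subset_rfl
      have : mCD G Z = Nat.card Z * p ^ n := by
        rw [mCD, hcz, Subgroup.card_top, hcard]
      exact this ▸ hle_star Z
    -- mStar ≤ (p * |Z|) * |C(X)|
    have hm2 : mStar G ≤ p * Nat.card Z * Nat.card (Subgroup.centralizer (X : Set G)) := by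
      rw [← hXcd, mCD]
      exact Nat.mul_le_mul_right _ hcardX
    have key : p ^ n ≤ p * Nat.card (Subgroup.centralizer (X : Set G)) := by
      have hZpos : 0 < Nat.card Z := Nat.card_pos
      have h3 : Nat.card Z * p ^ n
          ≤ Nat.card Z * (p * Nat.card (Subgroup.centralizer (X : Set G))) := by
        calc Nat.card Z * p ^ n ≤ p * Nat.card Z * Nat.card (Subgroup.centralizer (X : Set G)) :=
              hm1.trans hm2
          _ = Nat.card Z * (p * Nat.card (Subgroup.centralizer (X : Set G))) := by ring
      exact Nat.le_of_mul_le_mul_left h3 hZpos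
    have hlow : p ^ n ≤ mCD G H := by
      rw [mCD, hH]
      exact key.trans (Nat.mul_le_mul_left p hcXH)
    -- upper bound
    have hCd : Nat.card (Subgroup.centralizer (H : Set G)) ∣ p ^ n :=
      hcard ▸ Subgroup.card_subgroup_dvd_card _
    obtain ⟨k, hk, hc⟩ := (Nat.dvd_prime_pow hp).mp hCd
    have hkn : k ≠ n := by
      intro h
      exact hCneTop ((Subgroup.card_eq_iff_eq_top _).mp (by rw [hc, h, hcard]))
    have hCle : Nat.card (Subgroup.centralizer (H : Set G)) ≤ p ^ (n - 1) := by
      rw [hc]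
      exact Nat.pow_le_pow_right hp.pos (by omega)
    have hup : mCD G H ≤ p ^ n := by
      rw [mCD, hH]
      calc p * Nat.card (Subgroup.centralizer (H : Set G)) ≤ p * p ^ (n - 1) :=
            Nat.mul_le_mul_left p hCle
        _ = p ^ n := by rw [← pow_succ']; congr 1; omega
    exact le_antisymm hup hlow
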